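/- Suppose f : ℝ^d → ℝ is twice differentiable, k-strongly convex and M-smooth, and Ĥ is a symmetric matrix satisfying (1-ε)k·I ⪯ Ĥ ⪯ (1+ε)M·I for some ε ∈ (0,1). Let p = -Ĥ^{-1}∇f(w) for some w ∈ ℝ^d. Then for every step size α with 0 < α ≤ 2(1-β)(1-ε)k/M and β ∈ (0, 1/2], the Armijo condition f(w + αp) ≤ f(w) + αβ·pᵀ∇f(w) holds. -/

import Mathlib

open scoped RealInnerProductSpace

/-- Armijo condition holds for approximate Newton directions for any
step size `α ≤ 2(1-β)(1-ε)k/M`. -/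
theorem stmt_2 {d : ℕ} (k M ε β : ℝ) (hk : 0 < k) (hkM : k ≤ M)
    (hε0 : 0 < ε) (hε1 : ε < 1) (hβ0 : 0 < β) (hβ1 : β ≤ 1 / 2)
    (f : EuclideanSpace ℝ (Fin d) → ℝ)
    (hgrad : ∀ w, HasGradientAt f (gradient f w) w)
    (Hf : EuclideanSpace ℝ (Fin d) →
      EuclideanSpace ℝ (Fin d) →L[ℝ] EuclideanSpace ℝ (Fin d))
    (hHf : ∀ w, HasFDerivAt (gradient f) (Hf w) w)
    (hstrong : ∀ w v, k * ‖v‖ ^ 2 ≤ ⟪v, Hf w v⟫)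
    (hsmooth : ∀ w v, ⟪v, Hf w v⟫ ≤ M * ‖v‖ ^ 2)
    (Hhat : EuclideanSpace ℝ (Fin d) →L[ℝ] EuclideanSpace ℝ (Fin d))
    (hsym : ∀ u v, ⟪Hhat u, v⟫ = ⟪u, Hhat v⟫)
    (hlow : ∀ v, (1 - ε) * k * ‖v‖ ^ 2 ≤ ⟪v, Hhat v⟫)
    (hup : ∀ v, ⟪v, Hhat v⟫ ≤ (1 + ε) * M * ‖v‖ ^ 2)
    (w p : EuclideanSpace ℝ (Fin d)) (hp : Hhat p = -gradient f w)
    (α : ℝ) (hα0 : 0 < α) (hα : α ≤ 2 * (1 - β) * (1 - ε) * k / M) :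
    f (w + α • p) ≤ f w + α * β * ⟪p, gradient f w⟫ := by
  have hM : 0 < M := hk.trans_le hkM
  set line : ℝ → EuclideanSpace ℝ (Fin d) := fun t => w + t • p with hline
  have hlineD : ∀ t, HasDerivAt line p t := by
    intro t
    have := ((hasDerivAt_id t).smul_const p).const_add w
    simp only [id_eq, one_smul] at this
    exact this
  set h : ℝ → ℝ := fun t => ⟪p, gradient f (line t)⟫ with hh
  have hGD : ∀ t, HasDerivAt (fun t => gradient f (line t)) (Hf (line t) p) t := fun t =>
    (hHf (line t)).comp_hasDerivAt t (hlineD t)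
  have hhD : ∀ t, HasDerivAt h (⟪p, Hf (line t) p⟫) t := by
    intro t
    have := (hasDerivAt_const t p).inner ℝ (hGD t)
    simpa [hh] using this
  set φ : ℝ → ℝ := fun t => f (line t) with hφ
  have hφD : ∀ t, HasDerivAt φ (h t) t := by
    intro t
    have h2 := (hgrad (line t)).hasFDerivAt.comp_hasDerivAt t (hlineD t)
    rw [InnerProductSpace.toDual_apply_apply] at h2
    simp only [hh]
    rw [real_inner_comm]
    exact h2
  have hhcont : Continuous h := by
    rw [continuous_iff_continuousAt]; exact fun t => (hhD t).continuousAt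
  have hφcont : Continuous φ := by
    rw [continuous_iff_continuousAt]; exact fun t => (hφD t).continuousAt
  -- Step 1: h t ≤ h 0 + M ‖p‖^2 * t for t ∈ [0, α]
  have step1 : ∀ t ∈ Set.Icc (0:ℝ) α, h t ≤ h 0 + M * ‖p‖ ^ 2 * t := by
    intro t ht
    have hanti : AntitoneOn (fun t => h t - M * ‖p‖ ^ 2 * t) (Set.Icc 0 α) := by
      apply antitoneOn_of_deriv_nonpos (convex_Icc 0 α)
      · exact (hhcont.sub (by fun_prop)).continuousOn
      · intro x hx
        have : HasDerivAt (fun t => h t - M * ‖p‖ ^ 2 * t)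
            (⟪p, Hf (line x) p⟫ - M * ‖p‖ ^ 2) x := by
          exact ((hhD x).sub ((hasDerivAt_id x).const_mul (M * ‖p‖ ^ 2))).congr_deriv (by ring)
        exact this.differentiableAt.differentiableWithinAt
      · intro x hx
        have hDx : HasDerivAt (fun t => h t - M * ‖p‖ ^ 2 * t)
            (⟪p, Hf (line x) p⟫ - M * ‖p‖ ^ 2) x := by
          have := (hhD x).sub ((hasDerivAt_id x).const_mul (M * ‖p‖ ^ 2))
          exact this.congr_deriv (by ring)
        rw [hDx.deriv]
        have := hsmooth (line x) p
        linarith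
    have h0mem : (0:ℝ) ∈ Set.Icc (0:ℝ) α := Set.left_mem_Icc.2 hα0.le
    have := hanti h0mem ht ht.1
    simp only at this
    linarith
  -- Step 2: φ α ≤ φ 0 + α * h 0 + M ‖p‖^2 α^2 / 2
  have step2 : φ α ≤ φ 0 + α * h 0 + M * ‖p‖ ^ 2 * α ^ 2 / 2 := by
    have hψD : ∀ x : ℝ, HasDerivAt (fun t => φ 0 + t * h 0 + M * ‖p‖ ^ 2 * t ^ 2 / 2)
        (h 0 + M * ‖p‖ ^ 2 * x) x := by
      intro x
      have h1 : HasDerivAt (fun t : ℝ => t * h 0) (h 0) x := by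
        simpa using (hasDerivAt_id x).mul_const (h 0)
      have h2 : HasDerivAt (fun t : ℝ => M * ‖p‖ ^ 2 * t ^ 2 / 2)
          (M * ‖p‖ ^ 2 * x) x := by
        have := ((hasDerivAt_pow 2 x).const_mul (M * ‖p‖ ^ 2)).div_const 2
        exact this.congr_deriv (by norm_num; ring)
      exact (h1.const_add (φ 0)).add h2
    have hanti : AntitoneOn
        (fun t => φ t - (φ 0 + t * h 0 + M * ‖p‖ ^ 2 * t ^ 2 / 2)) (Set.Icc 0 α) := by
      apply antitoneOn_of_deriv_nonpos (convex_Icc 0 α)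
      · exact (hφcont.sub (by fun_prop)).continuousOn
      · intro x hx
        exact ((hφD x).sub (hψD x)).differentiableAt.differentiableWithinAt
      · intro x hx
        rw [interior_Icc] at hx
        have hD : HasDerivAt (fun t => φ t - (φ 0 + t * h 0 + M * ‖p‖ ^ 2 * t ^ 2 / 2))
            (h x - (h 0 + M * ‖p‖ ^ 2 * x)) x := (hφD x).sub (hψD x)
        rw [hD.deriv]
        have := step1 x ⟨hx.1.le, hx.2.le⟩
        linarith
    have h0mem : (0:ℝ) ∈ Set.Icc (0:ℝ) α := Set.left_mem_Icc.2 hα0.le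
    have hαmem : α ∈ Set.Icc (0:ℝ) α := Set.right_mem_Icc.2 hα0.le
    have := hanti h0mem hαmem hα0.le
    simp only at this
    linarith
  -- algebra
  have hline0 : line 0 = w := by simp [hline]
  have hφ0 : φ 0 = f w := by rw [hφ]; simp only; rw [hline0]
  have hφα : φ α = f (w + α • p) := rfl
  have hgw : h 0 = ⟪p, gradient f w⟫ := by simp only [hh]; rw [hline0]
  have hQ : ⟪p, gradient f w⟫ = -⟪p, Hhat p⟫ := by
    have hgrw : gradient f w = -(Hhat p) := by rw [hp, neg_neg]
    rw [hgrw, inner_neg_right]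
  have hαM : α * M ≤ 2 * (1 - β) * (1 - ε) * k := (le_div_iff₀ hM).mp hα
  have h1 : 0 ≤ (1 - β) * (α * (⟪p, Hhat p⟫ - (1 - ε) * k * ‖p‖ ^ 2)) :=
    mul_nonneg (by linarith) (mul_nonneg hα0.le (sub_nonneg.2 (hlow p)))
  have h2 : 0 ≤ (α * ‖p‖ ^ 2) * (2 * (1 - β) * (1 - ε) * k - α * M) :=
    mul_nonneg (mul_nonneg hα0.le (sq_nonneg _)) (sub_nonneg.2 hαM)
  rw [← hφα, ← hφ0, hQ]
  rw [hgw, hQ] at step2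
  nlinarith [step2, h1, h2]
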